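/- For every n ≥ 1, the following identity holds in 𝓕₂*: Σ_{I' ∈ C((2^0, 2^1, …, 2^{n−1}))} S_{I'} = Σ_{α} Π_{k=1}^{l(α)} S_{(2^{σ(k)+α(k)−1}, 2^{σ(k)+α(k)−2}, …, 2^{σ(k)})}, where α = (α(1),…,α(l(α))) runs over all compositions of n (finite sequences of positive integers summing to n) and σ(k) = α(1) + ⋯ + α(k−1). (This is Milnor's conjugation formula χ(ξ_n) = Σ_α Π_k ξ_{α(k)}^{2^{σ(k)}} read in the mod 2 dual Leibniz–Hopf algebra.) -/

import Mathlib

/-- The overlapping shuffle product of two finite sequences, as a multiset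
(counting multiplicities). -/
def osp : List ℕ → List ℕ → Multiset (List ℕ)
  | A, [] => {A}
  | [], B => {B}
  | a :: A, b :: B =>
      ((osp A (b :: B)).map (a :: ·)) +
      ((osp (a :: A) B).map (b :: ·)) +
      ((osp A B).map ((a + b) :: ·))
termination_by A B => A.length + B.length
decreasing_by all_goals (simp only [List.length_cons]; omega)

/-- The underlying free module over `ZMod 2` on the set of finite sequences
(this carries the mod 2 dual Leibniz--Hopf algebra `𝓕₂*`). -/
abbrev F2D : Type := (List ℕ) →₀ ZMod 2

/-- The basis element `S_I`. -/
noncomputable def sElem (I : List ℕ) : F2D := Finsupp.single I 1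

/-- The element of `𝓕₂*` associated to a multiset of sequences, keeping
multiplicities mod 2. -/
noncomputable def ofMS (m : Multiset (List ℕ)) : F2D := (m.map sElem).sum

/-- The bilinear product of `𝓕₂*`: on basis elements,
`S_I · S_J = Σ_K (multiplicity of K in osp I J mod 2) • S_K`. -/
noncomputable def fmul (x y : F2D) : F2D :=
  x.sum fun I a => y.sum fun J b => (a * b) • ofMS (osp I J)

/-- The coarsening set `C(I)`: all sequences obtained from `I` by summing
consecutive blocks of entries.  (`C([]) = {[]}` by convention.) -/
def coars : List ℕ → Finset (List ℕ)
  | [] => {[]}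
  | [i] => {[i]}
  | i :: j :: rest =>
      ((coars (j :: rest)).image (i :: ·)) ∪
      ((coars (j :: rest)).image (fun I' => (i + I'.headD 0) :: I'.tail))

/-- The set of compositions of `n`: finite sequences of positive integers with
sum `n`. -/
def comps : ℕ → Finset (List ℕ)
  | 0 => {([] : List ℕ)}
  | n + 1 =>
      (Finset.range (n + 1)).attach.biUnion fun k =>
        (comps k.1).image fun α => (n + 1 - k.1) :: α
termination_by n => n
decreasing_by
  have h := Finset.mem_range.mp k.2
  omega

/-- The sequence `(2^{s+a−1}, 2^{s+a−2}, …, 2^s)`. -/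
def xiSeq (s a : ℕ) : List ℕ := ((List.range a).map fun i => 2 ^ (s + i)).reverse

/-- `milnorProd s (α(1),…,α(l)) = Π_{k=1}^{l} S_{(2^{σ(k)+α(k)−1},…,2^{σ(k)})}`
in `𝓕₂*`, where `σ(k) = s + α(1) + ⋯ + α(k−1)`. -/
noncomputable def milnorProd : ℕ → List ℕ → F2D
  | _, [] => sElem []
  | s, a :: rest => fmul (sElem (xiSeq s a)) (milnorProd (s + a) rest)

lemma osp_nil_right (A : List ℕ) : osp A [] = {A} := by
  cases A <;> rw [osp]

lemma osp_nil_left (B : List ℕ) : osp [] B = {B} := by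
  cases B with
  | nil => rw [osp]
  | cons b B => rw [osp]; exact fun h => nomatch h

lemma osp_cons_cons (a b : ℕ) (A B : List ℕ) :
    osp (a :: A) (b :: B) =
      ((osp A (b :: B)).map (a :: ·)) + ((osp (a :: A) B).map (b :: ·)) +
      ((osp A B).map ((a + b) :: ·)) := by
  rw [osp]

lemma coars_nil : coars [] = {[]} := rfl
lemma coars_single (i : ℕ) : coars [i] = {[i]} := rfl
lemma coars_cons (x : ℕ) (l : List ℕ) (hl : l ≠ []) :
    coars (x :: l) = ((coars l).image (x :: ·)) ∪
      ((coars l).image fun I' => (x + I'.headD 0) :: I'.tail) := by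
  cases l with
  | nil => exact absurd rfl hl
  | cons j rest => rfl

lemma coars_ne_nil : ∀ (l : List ℕ), l ≠ [] → ∀ I ∈ coars l, I ≠ []
  | [], hl, _, _ => absurd rfl hl
  | [i], _, I, hI => by
      rw [coars_single, Finset.mem_singleton] at hI
      subst hI; exact List.cons_ne_nil _ _
  | i :: j :: rest, _, I, hI => by
      rw [coars_cons i (j :: rest) (by simp)] at hI
      rcases Finset.mem_union.mp hI with h' | h' <;>
        obtain ⟨I', hI', rfl⟩ := Finset.mem_image.mp h' <;>
        exact List.cons_ne_nil _ _

lemma coars_head_pos : ∀ (l : List ℕ), l ≠ [] → (∀ x ∈ l, 0 < x) →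
    ∀ I ∈ coars l, 0 < I.headD 0
  | [], hl, _, _, _ => absurd rfl hl
  | [i], _, h, I, hI => by
      rw [coars_single, Finset.mem_singleton] at hI
      subst hI; simpa using h i (by simp)
  | i :: j :: rest, _, h, I, hI => by
      rw [coars_cons i (j :: rest) (by simp)] at hI
      rcases Finset.mem_union.mp hI with h' | h' <;>
        obtain ⟨I', hI', rfl⟩ := Finset.mem_image.mp h'
      · simpa using h i (by simp)
      · have h2 := coars_head_pos (j :: rest) (by simp)
          (fun x hx => h x (List.mem_cons_of_mem _ hx)) I' hI'
        have hi := h i List.mem_cons_self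
        simp only [List.headD_cons]
        omega

lemma headD_cons_tail {I : List ℕ} (h : I ≠ []) : I.headD 0 :: I.tail = I := by
  cases I with
  | nil => exact absurd rfl h
  | cons a t => rfl

/-- `T(a)` from the telescoping argument. -/
def Tm (w : List ℕ) (a : ℕ) : Multiset (List ℕ) :=
  ∑ J ∈ coars (w.take a).reverse, osp (w.drop a) J

/-- the "first letter is the first block of the coarsening" part. -/
def P1 (w : List ℕ) (a : ℕ) : Multiset (List ℕ) :=
  if a = 0 then 0 else
  ∑ J ∈ coars (w.take a).reverse, (osp (w.drop a) J.tail).map (J.headD 0 :: ·)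

/-- the "first letter involves `w[a]`" part. -/
def Xm (w : List ℕ) (a : ℕ) : Multiset (List ℕ) :=
  if w.length ≤ a then 0 else
  ∑ J ∈ coars (w.take a).reverse,
    ((osp (w.drop (a + 1)) J).map (w.getD a 0 :: ·) +
      if J = [] then 0 else
        (osp (w.drop (a + 1)) J.tail).map ((w.getD a 0 + J.headD 0) :: ·))

lemma lemA (w : List ℕ) (hw : w ≠ []) (a : ℕ) (ha : a ≤ w.length) :
    Tm w a = P1 w a + Xm w a := by
  rcases Nat.eq_zero_or_pos a with rfl | hpos
  · have hlen : ¬ (w.length ≤ 0) := by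
      intro h
      exact hw (List.length_eq_zero_iff.mp (Nat.le_zero.mp h))
    rw [Tm, P1, Xm, if_pos rfl, if_neg hlen]
    cases w with
    | nil => exact absurd rfl hw
    | cons x t =>
      simp only [List.take_zero, List.reverse_nil, coars_nil, Finset.sum_singleton,
        List.drop_zero, List.drop_succ_cons, List.drop_zero, if_pos rfl, add_zero, zero_add,
        List.getD_cons_zero, osp_nil_right, Multiset.map_singleton, if_true]
  · rcases Nat.lt_or_ge a w.length with hlt | hge
    · -- 1 ≤ a < length
      have hne : (w.take a).reverse ≠ [] := by
        apply List.ne_nil_of_length_pos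
        simp only [List.length_reverse, List.length_take]
        omega
      rw [Tm, P1, Xm, if_neg hpos.ne', if_neg (not_le.mpr hlt)]
      rw [← Finset.sum_add_distrib]
      refine Finset.sum_congr rfl fun J hJ => ?_
      have hJne : J ≠ [] := coars_ne_nil _ hne J hJ
      rw [if_neg hJne]
      obtain ⟨j, J₂, rfl⟩ := List.exists_cons_of_ne_nil hJne
      rw [List.drop_eq_getElem_cons hlt, ← List.getD_eq_getElem w 0 hlt]
      rw [osp_cons_cons]
      simp only [List.headD_cons, List.tail_cons]
      abel
    · -- a = length
      have heq : a = w.length := le_antisymm ha hge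
      subst heq
      have hne : (w.take w.length).reverse ≠ [] := by
        simp only [List.take_length, ne_eq, List.reverse_eq_nil_iff]; exact hw
      have hlen0 : w.length ≠ 0 := fun h => hw (List.length_eq_zero_iff.mp h)
      rw [Tm, P1, Xm, if_neg hlen0, if_pos le_rfl, add_zero]
      refine Finset.sum_congr rfl fun J hJ => ?_
      have hJne : J ≠ [] := coars_ne_nil _ hne J hJ
      rw [List.drop_length, osp_nil_left, osp_nil_left, Multiset.map_singleton,
        headD_cons_tail hJne]

lemma take_succ_reverse (w : List ℕ) (b : ℕ) (h : b < w.length) :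
    (w.take (b + 1)).reverse = w.getD b 0 :: (w.take b).reverse := by
  rw [List.take_succ, List.getElem?_eq_getElem h, ← List.getD_eq_getElem w 0 h]
  simp

lemma lemB (w : List ℕ) (hpos : ∀ x ∈ w, 0 < x) (a : ℕ) (h1 : 1 ≤ a)
    (h2 : a ≤ w.length) : P1 w a = Xm w (a - 1) := by
  obtain ⟨b, rfl⟩ : ∃ b, a = b + 1 := ⟨a - 1, by omega⟩
  simp only [Nat.add_sub_cancel]
  have hblt : b < w.length := by omega
  rcases Nat.eq_zero_or_pos b with rfl | hb
  · -- a = 1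
    cases w with
    | nil => simp at hblt
    | cons x t =>
      rw [P1, if_neg (by omega), Xm, if_neg (by simp)]
      simp only [List.take_zero, List.reverse_nil, coars_nil, Finset.sum_singleton, if_pos rfl,
        add_zero]
      show ∑ J ∈ coars [x], _ = _
      rw [coars_single, Finset.sum_singleton]
      simp [osp_nil_right]
  · -- a = b + 1, b ≥ 1
    have hne' : (w.take b).reverse ≠ [] := by
      apply List.ne_nil_of_length_pos
      simp only [List.length_reverse, List.length_take]
      omega
    have hposC : ∀ I ∈ coars (w.take b).reverse, 0 < I.headD 0 := by
      refine coars_head_pos _ hne' fun x hx => hpos x ?_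
      exact List.take_subset b w (List.mem_reverse.mp hx)
    have hneC : ∀ I ∈ coars (w.take b).reverse, I ≠ [] :=
      coars_ne_nil _ hne'
    set x := w.getD b 0 with hx
    have hdisj : Disjoint ((coars (w.take b).reverse).image (x :: ·))
        ((coars (w.take b).reverse).image fun I' => (x + I'.headD 0) :: I'.tail) := by
      rw [Finset.disjoint_left]
      rintro J hJ1 hJ2
      obtain ⟨I₁, hI₁, rfl⟩ := Finset.mem_image.mp hJ1
      obtain ⟨I₂, hI₂, heq⟩ := Finset.mem_image.mp hJ2
      have hhead : x + I₂.headD 0 = x := (List.cons.injEq _ _ _ _).mp heq |>.1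
      have := hposC I₂ hI₂
      omega
    rw [P1, if_neg (by omega), Xm, if_neg (by omega), take_succ_reverse w b hblt,
      coars_cons _ _ hne', Finset.sum_union hdisj,
      Finset.sum_image (fun I₁ _ I₂ _ h => (List.cons.injEq _ _ _ _).mp h |>.2),
      Finset.sum_image (fun I₁ h₁ I₂ h₂ h => by
        have e := (List.cons.injEq _ _ _ _).mp h
        have e1 : I₁.headD 0 = I₂.headD 0 := by omega
        rw [← headD_cons_tail (hneC I₁ h₁), ← headD_cons_tail (hneC I₂ h₂), e1, e.2]),
      ← Finset.sum_add_distrib]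
    refine Finset.sum_congr rfl fun I' hI' => ?_
    rw [if_neg (hneC I' hI')]
    simp only [List.headD_cons, List.tail_cons]
    rfl

lemma telescope (w : List ℕ) (hw : w ≠ []) (hpos : ∀ x ∈ w, 0 < x) :
    ∑ a ∈ Finset.range (w.length + 1), Tm w a =
      (∑ a ∈ Finset.range w.length, Xm w a) +
      (∑ a ∈ Finset.range w.length, Xm w a) := by
  have h1 : ∑ a ∈ Finset.range (w.length + 1), Tm w a =
      (∑ a ∈ Finset.range (w.length + 1), P1 w a) +
      (∑ a ∈ Finset.range (w.length + 1), Xm w a) := by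
    rw [← Finset.sum_add_distrib]
    exact Finset.sum_congr rfl fun a ha =>
      lemA w hw a (by have := Finset.mem_range.mp ha; omega)
  rw [h1]
  congr 1
  · rw [Finset.sum_range_succ']
    have hP0 : P1 w 0 = 0 := by rw [P1, if_pos rfl]
    rw [hP0, add_zero]
    exact Finset.sum_congr rfl fun a ha => by
      have := Finset.mem_range.mp ha
      have := lemB w hpos (a + 1) (by omega) (by omega)
      simpa using this
  · rw [Finset.sum_range_succ]
    have hXn : Xm w w.length = 0 := by rw [Xm, if_pos le_rfl]
    rw [hXn, add_zero]

lemma F2D_add_self (x : F2D) : x + x = 0 := by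
  ext l
  have : (2 : ZMod 2) = 0 := rfl
  simp only [Finsupp.add_apply, Finsupp.coe_zero, Pi.zero_apply, ← two_mul, this, zero_mul]

lemma ofMS_zero : ofMS 0 = 0 := rfl

lemma ofMS_add (m₁ m₂ : Multiset (List ℕ)) : ofMS (m₁ + m₂) = ofMS m₁ + ofMS m₂ := by
  simp [ofMS, Multiset.map_add, Multiset.sum_add]

lemma ofMS_singleton (J : List ℕ) : ofMS {J} = sElem J := by
  simp [ofMS]

lemma ofMS_sum {β : Type*} (s : Finset β) (g : β → Multiset (List ℕ)) :
    ofMS (∑ b ∈ s, g b) = ∑ b ∈ s, ofMS (g b) := by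
  classical
  induction s using Finset.induction_on with
  | empty => simp [ofMS_zero]
  | insert _ _ h ih => rw [Finset.sum_insert h, Finset.sum_insert h, ofMS_add, ih]

lemma fmul_single (I J : List ℕ) : fmul (sElem I) (sElem J) = ofMS (osp I J) := by
  simp [fmul, sElem, Finsupp.sum_single_index]

lemma fmul_zero (x : F2D) : fmul x 0 = 0 := by
  simp [fmul]

lemma fmul_add (x y z : F2D) : fmul x (y + z) = fmul x y + fmul x z := by
  rw [fmul, fmul, fmul, ← Finsupp.sum_add]
  refine Finsupp.sum_congr fun I _ => ?_
  exact Finsupp.sum_add_index' (fun J => by rw [mul_zero, zero_smul])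
    (fun J b₁ b₂ => by rw [mul_add, add_smul])

lemma fmul_sum {β : Type*} (x : F2D) (s : Finset β) (g : β → F2D) :
    fmul x (∑ b ∈ s, g b) = ∑ b ∈ s, fmul x (g b) := by
  classical
  induction s using Finset.induction_on with
  | empty => simp [fmul_zero]
  | insert _ _ h ih => rw [Finset.sum_insert h, Finset.sum_insert h, fmul_add, ih]

/-- The coarsening-sum side. -/
noncomputable def Lsum (s n : ℕ) : F2D :=
  ∑ I ∈ coars ((List.range n).map fun i => 2 ^ (s + i)), sElem I

/-- The composition side. -/
noncomputable def Rsum (s n : ℕ) : F2D := ∑ α ∈ comps n, milnorProd s α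

lemma R_rec (s m : ℕ) :
    Rsum s (m + 1) =
      ∑ k ∈ Finset.range (m + 1),
        fmul (sElem (xiSeq s (m + 1 - k))) (Rsum (s + (m + 1 - k)) k) := by
  rw [Rsum, comps]
  rw [Finset.sum_biUnion ?hd]
  case hd =>
    intro k₁ _ k₂ _ hne
    apply Finset.disjoint_left.mpr
    rintro α hα1 hα2
    obtain ⟨β₁, _, rfl⟩ := Finset.mem_image.mp hα1
    obtain ⟨β₂, _, heq⟩ := Finset.mem_image.mp hα2
    have h1 := Finset.mem_range.mp k₁.2
    have h2 := Finset.mem_range.mp k₂.2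
    have : m + 1 - k₂.1 = m + 1 - k₁.1 := ((List.cons.injEq _ _ _ _).mp heq).1
    exact hne (Subtype.ext (by omega))
  rw [← Finset.sum_attach (Finset.range (m + 1))
    (fun k => fmul (sElem (xiSeq s (m + 1 - k))) (Rsum (s + (m + 1 - k)) k))]
  refine Finset.sum_congr rfl fun k _ => ?_
  rw [Finset.sum_image (fun a _ b _ h => ((List.cons.injEq _ _ _ _).mp h).2)]
  rw [Rsum, fmul_sum]
  refine Finset.sum_congr rfl fun α _ => ?_
  rw [milnorProd]

lemma L_rec (s n : ℕ) (hn : 1 ≤ n) :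
    Lsum s n =
      ∑ k ∈ Finset.range n, fmul (sElem (xiSeq s (n - k))) (Lsum (s + (n - k)) k) := by
  have hw : ((List.range n).map fun i => 2 ^ (s + i)).reverse ≠ [] := by
    apply List.ne_nil_of_length_pos
    simpa using (show 0 < n by omega)
  have hlen : ((List.range n).map fun i => 2 ^ (s + i)).reverse.length = n := by simp
  have hpos : ∀ x ∈ ((List.range n).map fun i => 2 ^ (s + i)).reverse, 0 < x := by
    intro x hx
    rw [List.mem_reverse, List.mem_map] at hx
    obtain ⟨i, _, rfl⟩ := hx
    positivity
  have h0 : ∑ a ∈ Finset.range (n + 1),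
      ofMS (Tm (((List.range n).map fun i => 2 ^ (s + i)).reverse) a) = 0 := by
    rw [← ofMS_sum]
    have ht := telescope _ hw hpos
    rw [hlen] at ht
    rw [ht, ofMS_add, F2D_add_self]
  have claim1 : ofMS (Tm (((List.range n).map fun i => 2 ^ (s + i)).reverse) n) = Lsum s n := by
    rw [Tm, List.take_of_length_le hlen.le, List.drop_eq_nil_of_le hlen.le,
      List.reverse_reverse, ofMS_sum]
    refine Finset.sum_congr rfl fun J _ => ?_
    rw [osp_nil_left, ofMS_singleton]
  have hl : ((List.range n).map fun i => 2 ^ (s + i)).length = n := by simp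
  have claim2 : ∀ a, a < n →
      ofMS (Tm (((List.range n).map fun i => 2 ^ (s + i)).reverse) a) =
        fmul (sElem (xiSeq s (n - a))) (Lsum (s + (n - a)) a) := by
    intro a ha
    have hdrop : ((List.range n).map fun i => 2 ^ (s + i)).reverse.drop a = xiSeq s (n - a) := by
      rw [List.drop_reverse, xiSeq]
      congr 1
      rw [hl, ← List.map_take, List.take_range]
      congr 2
      omega
    have htake : ((((List.range n).map fun i => 2 ^ (s + i)).reverse.take a)).reverse =
        (List.range a).map fun i => 2 ^ (s + (n - a) + i) := by
      rw [List.take_reverse, List.reverse_reverse, hl, ← List.map_drop]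
      have hr : List.range n = List.range (n - a) ++ (List.range a).map ((n - a) + ·) := by
        rw [← List.range_add]
        congr 1
        omega
      rw [hr, List.drop_left' List.length_range, List.map_map]
      refine List.map_congr_left fun i _ => ?_
      simp only [Function.comp]
      congr 1
      omega
    rw [Tm, hdrop, htake, ofMS_sum]
    rw [show Lsum (s + (n - a)) a = ∑ I ∈ coars ((List.range a).map fun i => 2 ^ (s + (n - a) + i)),
      sElem I from rfl]
    rw [fmul_sum]
    refine Finset.sum_congr rfl fun J _ => ?_
    rw [fmul_single]
  rw [Finset.sum_range_succ, claim1] at h0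
  rw [Finset.sum_congr rfl (fun a ha => claim2 a (Finset.mem_range.mp ha))] at h0
  set X := ∑ k ∈ Finset.range n, fmul (sElem (xiSeq s (n - k))) (Lsum (s + (n - k)) k) with hX
  calc Lsum s n = (X + X) + Lsum s n := by rw [F2D_add_self, zero_add]
    _ = X + (X + Lsum s n) := add_assoc _ _ _
    _ = X := by rw [h0, add_zero]

lemma L_eq_R : ∀ n s, Lsum s n = Rsum s n := by
  intro n
  induction n using Nat.strong_induction_on with
  | _ n ih =>
    intro s
    match n with
    | 0 =>
      rw [Lsum, Rsum]
      rw [show comps 0 = {([] : List ℕ)} from by rw [comps]]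
      simp only [List.range_zero, List.map_nil, coars_nil, Finset.sum_singleton]
      rw [milnorProd]
    | (m + 1) =>
      rw [L_rec s (m + 1) (by omega), R_rec s m]
      refine Finset.sum_congr rfl fun k hk => ?_
      rw [ih k (by have := Finset.mem_range.mp hk; omega)]

/-- Milnor's conjugation formula read in the mod 2 dual Leibniz--Hopf algebra:
for `n ≥ 1`,
`Σ_{I' ∈ C((2^0,…,2^{n−1}))} S_{I'}
  = Σ_α Π_{k=1}^{l(α)} S_{(2^{σ(k)+α(k)−1},…,2^{σ(k)})}`,
where `α` runs over all compositions of `n` and `σ(k) = α(1)+⋯+α(k−1)`. -/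
theorem milnor_conjugation (n : ℕ) (hn : 1 ≤ n) :
    ∑ I' ∈ coars ((List.range n).map (2 ^ ·)), sElem I' =
      ∑ α ∈ comps n, milnorProd 0 α := by
  have h := L_eq_R n 0
  rw [Lsum, Rsum] at h
  rw [← h]
  congr 2
  exact List.map_congr_left fun i _ => by rw [zero_add]
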